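/- Let P be a finite Γ-colored d-complete poset with top tree T and assume Γ is simply laced. Then T = Ch(P), where Ch(P) is the set of elements of P whose principal filter is a chain. -/

import Mathlib

/-!
Common definitions: Dynkin diagram data, Γ-colored posets, and the coloring
properties EC, NA, AC, ICE2, UCB1, LCB1 from the paper, together with
Γ-colored d-complete and Γ-colored minuscule posets, top trees, slant
irreducibility, extensions, lower frontier censuses, and full heaps.
-/

universe u v w

variable {Γ : Type u} {P : Type v}

/-- The integers `θ a b` form a Dynkin diagram datum. -/
def DynkinDatum (θ : Γ → Γ → ℤ) : Prop :=
  (∀ a : Γ, θ a a = 2) ∧ (∀ a b : Γ, a ≠ b → θ a b ≤ 0) ∧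
    (∀ a b : Γ, a ≠ b → (θ a b = 0 ↔ θ b a = 0))

/-- Colors `a` and `b` are adjacent. -/
def AdjColor (θ : Γ → Γ → ℤ) (a b : Γ) : Prop := θ a b < 0

/-- The Dynkin diagram is simply laced. -/
def SimplyLaced (θ : Γ → Γ → ℤ) : Prop :=
  ∀ a b : Γ, a ≠ b → θ a b = 0 ∨ θ a b = -1

/-- All closed intervals are finite. -/
def LocallyFinitePoset (α : Type*) [PartialOrder α] : Prop :=
  ∀ x y : α, (Set.Icc x y).Finite

/-- A poset is connected if it cannot be written as a disjoint union of two nonempty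
subposets with no comparabilities between them. -/
def ConnectedPoset (α : Type*) [PartialOrder α] : Prop :=
  ∀ S : Set α, S.Nonempty → Sᶜ.Nonempty → ∃ x ∈ S, ∃ y ∈ Sᶜ, x ≤ y ∨ y ≤ x

section
variable [PartialOrder P]

/-- (EC) Elements with equal colors are comparable. -/
def ColoredEC (κ : P → Γ) : Prop := ∀ x y : P, κ x = κ y → x ≤ y ∨ y ≤ x

/-- (NA) Neighbors have adjacent colors. -/
def ColoredNA (θ : Γ → Γ → ℤ) (κ : P → Γ) : Prop :=
  ∀ x y : P, x ⋖ y → AdjColor θ (κ x) (κ y)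

/-- (AC) Elements with adjacent colors are comparable. -/
def ColoredAC (θ : Γ → Γ → ℤ) (κ : P → Γ) : Prop :=
  ∀ x y : P, AdjColor θ (κ x) (κ y) → x ≤ y ∨ y ≤ x

/-- (ICE2) Between consecutive elements of a color `a`, the census of colors
adjacent to `a` is two. -/
def ColoredICE2 (θ : Γ → Γ → ℤ) (κ : P → Γ) : Prop :=
  ∀ (a : Γ) (x y : P), κ x = a → κ y = a → x < y → (∀ z ∈ Set.Ioo x y, κ z ≠ a) →
    (∑ᶠ z ∈ Set.Ioo x y, -θ (κ z) a) = 2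

/-- `U(x,P)`: elements above `x` with color adjacent to that of `x`. -/
def USet (θ : Γ → Γ → ℤ) (κ : P → Γ) (x : P) : Set P :=
  {y : P | x < y ∧ AdjColor θ (κ y) (κ x)}

/-- `L(x,P)`: elements below `x` with color adjacent to that of `x`. -/
def LSet (θ : Γ → Γ → ℤ) (κ : P → Γ) (x : P) : Set P :=
  {y : P | y < x ∧ AdjColor θ (κ y) (κ x)}

/-- (UCB1) Upper frontier census bound. -/
def ColoredUCB1 (θ : Γ → Γ → ℤ) (κ : P → Γ) : Prop :=
  ∀ x : P, (∀ y : P, κ y = κ x → ¬x < y) →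
    (USet θ κ x).Finite ∧ (∑ᶠ y ∈ USet θ κ x, -θ (κ y) (κ x)) ≤ 1

/-- (LCB1) Lower frontier census bound. -/
def ColoredLCB1 (θ : Γ → Γ → ℤ) (κ : P → Γ) : Prop :=
  ∀ x : P, (∀ y : P, κ y = κ x → ¬y < x) →
    (LSet θ κ x).Finite ∧ (∑ᶠ y ∈ LSet θ κ x, -θ (κ y) (κ x)) ≤ 1

/-- A Γ-colored d-complete poset: locally finite, surjectively colored, and
satisfying EC, NA, AC, ICE2, and UCB1. -/
def GColoredDComplete (θ : Γ → Γ → ℤ) (κ : P → Γ) : Prop :=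
  LocallyFinitePoset P ∧ Function.Surjective κ ∧ ColoredEC κ ∧ ColoredNA θ κ ∧
    ColoredAC θ κ ∧ ColoredICE2 θ κ ∧ ColoredUCB1 θ κ

/-- A Γ-colored minuscule poset: Γ-colored d-complete and LCB1. -/
def GColoredMinuscule (θ : Γ → Γ → ℤ) (κ : P → Γ) : Prop :=
  GColoredDComplete θ κ ∧ ColoredLCB1 θ κ

/-- The top tree: the set of elements maximal in their color class. -/
def TopTree (κ : P → Γ) : Set P := {x : P | ∀ y : P, κ y = κ x → ¬x < y}

/-- `x` is covered by `y` within the subposet `S`. -/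
def CoversIn (S : Set P) (x y : P) : Prop :=
  x ∈ S ∧ y ∈ S ∧ x < y ∧ ∀ z ∈ S, x < z → ¬z < y

/-- Slant irreducibility of a Γ-colored d-complete poset. -/
def SlantIrreducible (κ : P → Γ) : Prop :=
  ConnectedPoset P ∧ ∀ x y : P, CoversIn (TopTree κ) x y → ∃ z : P, z ≠ y ∧ κ z = κ y

/-- A saturated chain in a subposet `S`: a chain that is convex in `S`. -/
def SaturatedChainIn (S C : Set P) : Prop :=
  C ⊆ S ∧ IsChain (· ≤ ·) C ∧ ∀ x ∈ C, ∀ y ∈ C, ∀ z ∈ S, x < z → z < y → z ∈ C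

/-- The lower frontier census at the element `y`. -/
noncomputable def LCensus (θ : Γ → Γ → ℤ) (κ : P → Γ) (y : P) : ℤ :=
  ∑ᶠ x ∈ LSet θ κ y, -θ (κ x) (κ y)

/-- A full heap: locally finite, surjectively colored, EC, NA, AC, ICE2, and every
color class order-isomorphic to ℤ. -/
def FullHeap (θ : Γ → Γ → ℤ) (κ : P → Γ) : Prop :=
  LocallyFinitePoset P ∧ Function.Surjective κ ∧ ColoredEC κ ∧ ColoredNA θ κ ∧
    ColoredAC θ κ ∧ ColoredICE2 θ κ ∧ ∀ a : Γ, Nonempty ({x : P // κ x = a} ≃o ℤ)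

end

/-- `ι` realizes the colored poset `A` as an order filter of the colored poset `B`. -/
def FilterEmbedding {G : Type*} {A B : Type*} [PartialOrder A] [PartialOrder B]
    (κ : A → G) (κ' : B → G) (ι : A → B) : Prop :=
  (∀ p q : A, ι p ≤ ι q ↔ p ≤ q) ∧ (∀ p : A, κ' (ι p) = κ p) ∧ IsUpperSet (Set.range ι)

/-- `B` is an extension of `A` by the color `a`, with extending element `x`. -/
def IsExtensionBy {G : Type*} {A B : Type*} [PartialOrder A] [PartialOrder B]
    (θ : G → G → ℤ) (κ : A → G) (κ' : B → G) (a : G) (ι : A → B) (x : B) : Prop :=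
  Finite B ∧ GColoredDComplete θ κ' ∧ ConnectedPoset B ∧
    FilterEmbedding κ κ' ι ∧ (Set.range ι)ᶜ = {x} ∧ κ' x = a

section Helpers

variable {Γ : Type u} {P : Type v}

lemma adjColor_ne {θ : Γ → Γ → ℤ} (hθ : DynkinDatum θ) {a b : Γ}
    (h : AdjColor θ a b) : a ≠ b := by
  rintro rfl
  have h2 := hθ.1 a
  unfold AdjColor at h
  omega

lemma adjColor_symm {θ : Γ → Γ → ℤ} (hθ : DynkinDatum θ) {a b : Γ}
    (h : AdjColor θ a b) : AdjColor θ b a := by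
  have hne := adjColor_ne hθ h
  have h1 := hθ.2.1 b a hne.symm
  have h2 := hθ.2.2 a b hne
  unfold AdjColor at *
  rcases lt_or_eq_of_le h1 with h' | h'
  · exact h'
  · exact absurd (h2.mpr h') (ne_of_lt h)

lemma adjColor_neg_one {θ : Γ → Γ → ℤ} (hθ : DynkinDatum θ) (hsl : SimplyLaced θ)
    {a b : Γ} (h : AdjColor θ a b) : -θ a b = 1 := by
  rcases hsl a b (adjColor_ne hθ h) with h' | h'
  · exact absurd h' (ne_of_lt h)
  · omega

lemma two_le_sum_of_pair {F : Finset P} (f : P → ℤ) {a b : P}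
    (ha : a ∈ F) (hb : b ∈ F) (hab : a ≠ b) (h1 : ∀ y ∈ F, f y = 1) :
    2 ≤ ∑ y ∈ F, f y := by
  classical
  have hsub : ({a, b} : Finset P) ⊆ F := by
    intro z hz
    rcases Finset.mem_insert.mp hz with rfl | hz
    · exact ha
    · rcases Finset.mem_singleton.mp hz with rfl
      exact hb
  calc (2 : ℤ) = ∑ y ∈ ({a, b} : Finset P), f y := by
        rw [Finset.sum_pair hab, h1 a ha, h1 b hb]; norm_num
    _ ≤ ∑ y ∈ F, f y :=
        Finset.sum_le_sum_of_subset_of_nonneg hsub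
          (fun i hi _ => by rw [h1 i hi]; norm_num)

end Helpers

/-- For a finite Γ-colored d-complete poset with Γ simply laced, the top
tree equals the set of elements whose principal filter is a chain. -/
theorem topTree_eq_chainFilterSet [Fintype Γ] [PartialOrder P] [Fintype P]
    (θ : Γ → Γ → ℤ) (κ : P → Γ) (hθ : DynkinDatum θ) (hsl : SimplyLaced θ)
    (hdc : GColoredDComplete θ κ) :
    TopTree κ = {x : P | IsChain (· ≤ ·) (Set.Ici x)} := by
  classical
  obtain ⟨hlf, hsurj, hEC, hNA, hAC, hICE2, hUCB1⟩ := hdc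
  -- In the simply laced case, for a maximal-in-its-color element x, the set
  -- USet θ κ x has at most one element.
  have husingle : ∀ x : P, (∀ y : P, κ y = κ x → ¬x < y) →
      ∀ w ∈ USet θ κ x, ∀ w' ∈ USet θ κ x, w = w' := by
    intro x hx w hw w' hw'
    by_contra hne
    obtain ⟨hfin, hsum⟩ := hUCB1 x hx
    have hsum' : ∑ y ∈ hfin.toFinset, (-θ (κ y) (κ x)) ≤ 1 := by
      rw [← finsum_mem_eq_finite_toFinset_sum _ hfin]
      exact hsum
    have h1 : ∀ y ∈ hfin.toFinset, -θ (κ y) (κ x) = 1 := by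
      intro y hy
      exact adjColor_neg_one hθ hsl (hfin.mem_toFinset.mp hy).2
    have h2 : 2 ≤ ∑ y ∈ hfin.toFinset, (-θ (κ y) (κ x)) :=
      two_le_sum_of_pair (fun y => -θ (κ y) (κ x))
        (hfin.mem_toFinset.mpr hw) (hfin.mem_toFinset.mpr hw') hne h1
    omega
  -- Direction 1: top tree elements have chain filters.
  have wfgt : WellFoundedGT P := inferInstance
  have key : ∀ x : P, (∀ y : P, κ y = κ x → ¬x < y) → IsChain (· ≤ ·) (Set.Ici x) := by
    intro x
    induction x using wfgt.wf.induction with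
    | _ x IH =>
      intro hx
      by_cases hmax : ∀ y : P, ¬x < y
      · -- Ici x = {x}
        intro y hy z hz _
        have hy' : y = x := le_antisymm (by
          by_contra h
          exact hmax y (lt_of_le_of_ne hy (fun h' => h (h' ▸ le_refl x)))) hy
        exact Or.inl (hy' ▸ hz)
      · push_neg at hmax
        obtain ⟨y0, hy0⟩ := hmax
        -- the unique cover x₁ of x
        have hS : ({z : P | x < z}).toFinset.Nonempty :=
          ⟨y0, Set.mem_toFinset.mpr hy0⟩
        obtain ⟨x₁, hx₁mem, hx₁min⟩ := (Finset.exists_minimal hS).imp fun m hm => And.intro hm.1 fun y hy (hlt : y < m) => hlt.not_ge (hm.2 hy hlt.le)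
        have hxx₁ : x < x₁ := Set.mem_toFinset.mp hx₁mem
        have hcov : x ⋖ x₁ := ⟨hxx₁, fun c hc1 hc2 =>
          hx₁min c (Set.mem_toFinset.mpr hc1) hc2⟩
        have hx₁U : x₁ ∈ USet θ κ x := ⟨hxx₁, adjColor_symm hθ (hNA x x₁ hcov)⟩
        -- every element above x is above x₁
        have habove : ∀ y : P, x < y → x₁ ≤ y := by
          intro y hy
          have hT : ({z : P | x < z ∧ z ≤ y}).toFinset.Nonempty :=
            ⟨y, Set.mem_toFinset.mpr ⟨hy, le_refl y⟩⟩
          obtain ⟨m, hmmem, hmmin⟩ := (Finset.exists_minimal hT).imp fun m hm => And.intro hm.1 fun y hy (hlt : y < m) => hlt.not_ge (hm.2 hy hlt.le)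
          obtain ⟨hm1, hm2⟩ := Set.mem_toFinset.mp hmmem
          have hcovm : x ⋖ m := ⟨hm1, fun c hc1 hc2 =>
            hmmin c (Set.mem_toFinset.mpr ⟨hc1, le_of_lt (lt_of_lt_of_le hc2 hm2)⟩) hc2⟩
          have hmU : m ∈ USet θ κ x := ⟨hm1, adjColor_symm hθ (hNA x m hcovm)⟩
          have : m = x₁ := husingle x hx m hmU x₁ hx₁U
          exact this ▸ hm2
        -- x₁ is in the top tree
        have hx₁top : ∀ q : P, κ q = κ x₁ → ¬x₁ < q := by
          intro q hq hlt
          have hqU : q ∈ USet θ κ x := ⟨lt_trans hxx₁ hlt, hq ▸ hx₁U.2⟩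
          have : q = x₁ := husingle x hx q hqU x₁ hx₁U
          exact absurd (this ▸ hlt) (lt_irrefl x₁)
        have hchain₁ : IsChain (· ≤ ·) (Set.Ici x₁) := IH x₁ hxx₁ hx₁top
        intro y hy z hz hne
        rcases lt_or_eq_of_le (Set.mem_Ici.mp hy) with hy' | hy'
        · rcases lt_or_eq_of_le (Set.mem_Ici.mp hz) with hz' | hz'
          · exact hchain₁ (Set.mem_Ici.mpr (habove y hy')) (Set.mem_Ici.mpr (habove z hz')) hne
          · exact Or.inr (hz' ▸ le_of_lt hy')
        · exact Or.inl (hy' ▸ Set.mem_Ici.mp hz)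
  ext x
  simp only [TopTree, Set.mem_setOf_eq]
  constructor
  · exact key x
  · -- Direction 2: chain filter implies top tree.
    intro hchain
    intro y hyx hxy
    -- A : elements above x admitting a same-colored element strictly above
    have hA : ({u : P | x ≤ u ∧ ∃ w : P, u < w ∧ κ w = κ u}).toFinset.Nonempty :=
      ⟨x, Set.mem_toFinset.mpr ⟨le_refl x, y, hxy, hyx⟩⟩
    obtain ⟨u, humem, humax⟩ := (Finset.exists_maximal hA).imp fun m hm => And.intro hm.1 fun y hy (hlt : m < y) => hlt.not_ge (hm.2 hy hlt.le)
    obtain ⟨hxu, w0, hw0, hw0c⟩ := Set.mem_toFinset.mp humem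
    -- v : minimal same-colored element above u
    have hB : ({w : P | u < w ∧ κ w = κ u}).toFinset.Nonempty :=
      ⟨w0, Set.mem_toFinset.mpr ⟨hw0, hw0c⟩⟩
    obtain ⟨v, hvmem, hvmin⟩ := (Finset.exists_minimal hB).imp fun m hm => And.intro hm.1 fun y hy (hlt : y < m) => hlt.not_ge (hm.2 hy hlt.le)
    obtain ⟨huv, hvc⟩ := Set.mem_toFinset.mp hvmem
    have hcons : ∀ z ∈ Set.Ioo u v, κ z ≠ κ u := by
      intro z hz hzc
      exact hvmin z (Set.mem_toFinset.mpr ⟨hz.1, hzc⟩) hz.2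
    have hICE := hICE2 (κ u) u v rfl hvc huv hcons
    have hfinIoo : (Set.Ioo u v).Finite := Set.toFinite _
    have hICE' : ∑ z ∈ hfinIoo.toFinset, (-θ (κ z) (κ u)) = 2 := by
      rw [← finsum_mem_eq_finite_toFinset_sum _ hfinIoo]
      exact hICE
    -- terms are 0 or 1
    have hterm : ∀ z ∈ hfinIoo.toFinset, 0 ≤ -θ (κ z) (κ u) ∧ -θ (κ z) (κ u) ≤ 1 := by
      intro z hz
      have hz' := hfinIoo.mem_toFinset.mp hz
      have hne := hcons z hz'
      rcases hsl (κ z) (κ u) hne with h' | h' <;> omega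
    -- the interval is nonempty; take its minimal element s1
    have hne : hfinIoo.toFinset.Nonempty := by
      by_contra h
      rw [Finset.not_nonempty_iff_eq_empty] at h
      rw [h, Finset.sum_empty] at hICE'
      omega
    obtain ⟨s1, hs1mem, hs1min⟩ := (Finset.exists_minimal hne).imp fun m hm => And.intro hm.1 fun y hy (hlt : y < m) => hlt.not_ge (hm.2 hy hlt.le)
    have hs1Ioo : s1 ∈ Set.Ioo u v := hfinIoo.mem_toFinset.mp hs1mem
    have hcov1 : u ⋖ s1 := ⟨hs1Ioo.1, fun c hc1 hc2 =>
      hs1min c (hfinIoo.mem_toFinset.mpr ⟨hc1, lt_trans hc2 hs1Ioo.2⟩) hc2⟩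
    have hadjus1 : AdjColor θ (κ u) (κ s1) := hNA u s1 hcov1
    -- a second element z2 ≠ s1 of the interval with nonzero census term
    have hz2 : ∃ z2 ∈ hfinIoo.toFinset.erase s1, -θ (κ z2) (κ u) ≠ 0 := by
      apply Finset.exists_ne_zero_of_sum_ne_zero
      have hsplit : -θ (κ s1) (κ u) + ∑ z ∈ hfinIoo.toFinset.erase s1, (-θ (κ z) (κ u)) =
          ∑ z ∈ hfinIoo.toFinset, (-θ (κ z) (κ u)) :=
        Finset.add_sum_erase _ (fun z => -θ (κ z) (κ u)) hs1mem
      have h1 := hterm s1 hs1mem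
      omega
    obtain ⟨z2, hz2mem, hz2ne0⟩ := hz2
    have hz2ne : z2 ≠ s1 := (Finset.mem_erase.mp hz2mem).1
    have hz2Ioo : z2 ∈ Set.Ioo u v :=
      hfinIoo.mem_toFinset.mp (Finset.mem_erase.mp hz2mem).2
    -- s1 < z2 using the chain hypothesis
    have hs1z2 : s1 < z2 := by
      have hcmp := hchain (Set.mem_Ici.mpr (le_of_lt (lt_of_le_of_lt hxu hs1Ioo.1)))
        (Set.mem_Ici.mpr (le_of_lt (lt_of_le_of_lt hxu hz2Ioo.1))) hz2ne.symm
      rcases hcmp with h | h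
      · exact lt_of_le_of_ne h (fun h' => hz2ne h'.symm)
      · exact absurd (lt_of_le_of_ne h hz2ne)
          (hs1min z2 (hfinIoo.mem_toFinset.mpr hz2Ioo))
    -- s2 : minimal element of (s1, v)
    have hfin2 : (Set.Ioo s1 v).Finite := Set.toFinite _
    have hne2 : hfin2.toFinset.Nonempty :=
      ⟨z2, hfin2.mem_toFinset.mpr ⟨hs1z2, hz2Ioo.2⟩⟩
    obtain ⟨s2, hs2mem, hs2min⟩ := (Finset.exists_minimal hne2).imp fun m hm => And.intro hm.1 fun y hy (hlt : y < m) => hlt.not_ge (hm.2 hy hlt.le)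
    have hs2Ioo : s2 ∈ Set.Ioo s1 v := hfin2.mem_toFinset.mp hs2mem
    have hcov2 : s1 ⋖ s2 := ⟨hs2Ioo.1, fun c hc1 hc2 =>
      hs2min c (hfin2.mem_toFinset.mpr ⟨hc1, lt_trans hc2 hs2Ioo.2⟩) hc2⟩
    -- s1 is maximal in its color class
    have hs1top : ∀ q : P, κ q = κ s1 → ¬s1 < q := by
      intro q hq hlt
      have : s1 ∈ ({u : P | x ≤ u ∧ ∃ w : P, u < w ∧ κ w = κ u}).toFinset :=
        Set.mem_toFinset.mpr ⟨le_of_lt (lt_of_le_of_lt hxu hs1Ioo.1), q, hlt, hq⟩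
      exact humax s1 this hs1Ioo.1
    -- both s2 and v belong to USet θ κ s1, contradicting UCB1
    have hs2U : s2 ∈ USet θ κ s1 := ⟨hs2Ioo.1, adjColor_symm hθ (hNA s1 s2 hcov2)⟩
    have hvU : v ∈ USet θ κ s1 := ⟨hs1Ioo.2, hvc ▸ hadjus1⟩
    have : s2 = v := husingle s1 hs1top s2 hs2U v hvU
    exact absurd (this ▸ hs2Ioo.2) (lt_irrefl v)
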